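/- Fix δ > 0, a complexity function c : {1, …, K} → [0, ∞), and μ⁰ ∈ ℝ^K such that δ ≠ μ⁰_k − min_j μ⁰_j for all k. Let (V_n) be random vectors in ℝ^K with V_n → μ⁰ in probability. Then P(c_δ*(V_n) = c_δ*(μ⁰)) → 1 as n → ∞. -/

import Mathlib

open MeasureTheory Filter Topology Set

/-- The minimum coordinate `min_j μ_j`. -/
noncomputable def minCoord {K : ℕ} (μ : EuclideanSpace ℝ (Fin K)) : ℝ :=
  sInf (Set.range fun j => μ j)

/-- The `δ`-optimal set `M_δ(μ) = {k : μ_k ≤ min_j μ_j + δ}`. -/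
def deltaOptSet {K : ℕ} (δ : ℝ) (μ : EuclideanSpace ℝ (Fin K)) : Set (Fin K) :=
  {k | μ k ≤ minCoord μ + δ}

/-- The minimal `δ`-optimal complexity `c_δ*(μ) = min {c(k) : k ∈ M_δ(μ)}`. -/
noncomputable def minDeltaComplexity {K : ℕ} (c : Fin K → ℝ) (δ : ℝ)
    (μ : EuclideanSpace ℝ (Fin K)) : ℝ :=
  sInf (c '' deltaOptSet δ μ)

lemma coord_dist_le {K : ℕ} (x y : EuclideanSpace ℝ (Fin K)) (k : Fin K) :
    |x k - y k| ≤ dist x y := by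
  rw [EuclideanSpace.dist_eq]
  have h : |x k - y k| = Real.sqrt (dist (x k) (y k) ^ 2) := by
    rw [Real.sqrt_sq_eq_abs, Real.dist_eq, abs_abs]
  rw [h]
  apply Real.sqrt_le_sqrt
  exact Finset.single_le_sum (f := fun i => dist (x i) (y i) ^ 2)
    (fun i _ => sq_nonneg _) (Finset.mem_univ k)

lemma minCoord_le {K : ℕ} [Nonempty (Fin K)] (x : EuclideanSpace ℝ (Fin K)) (k : Fin K) :
    minCoord x ≤ x k :=
  csInf_le (Set.finite_range _).bddBelow (Set.mem_range_self k)

lemma minCoord_mem {K : ℕ} [Nonempty (Fin K)] (x : EuclideanSpace ℝ (Fin K)) :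
    ∃ j, minCoord x = x j := by
  have := (Set.range_nonempty (fun j => x j)).csInf_mem (Set.finite_range _)
  obtain ⟨j, hj⟩ := this
  exact ⟨j, hj.symm⟩

lemma minCoord_stab {K : ℕ} [Nonempty (Fin K)] (x y : EuclideanSpace ℝ (Fin K)) (ε : ℝ)
    (h : ∀ k, |x k - y k| ≤ ε) : minCoord x ≤ minCoord y + ε := by
  obtain ⟨j, hj⟩ := minCoord_mem y
  have h1 := minCoord_le x j
  have h2 := abs_sub_le_iff.1 (h j)
  rw [hj]
  linarith [h2.1]

theorem stmt10 {K : ℕ} (hK : 1 ≤ K) (δ : ℝ) (hδ : 0 < δ)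
    (c : Fin K → ℝ) (hc : ∀ k, 0 ≤ c k)
    (μ0 : EuclideanSpace ℝ (Fin K)) (hμ0 : ∀ k, δ ≠ μ0 k - minCoord μ0)
    {Ω : Type*} [MeasurableSpace Ω] (P : Measure Ω) [IsProbabilityMeasure P]
    (V : ℕ → Ω → EuclideanSpace ℝ (Fin K))
    (hV : TendstoInMeasure P V atTop (fun _ => μ0)) :
    Tendsto (fun n => P {ω | minDeltaComplexity c δ (V n ω) = minDeltaComplexity c δ μ0})
      atTop (𝓝 1) := by
  haveI : Nonempty (Fin K) := ⟨⟨0, hK⟩⟩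
  set m := minCoord μ0 with hm
  -- choose ε
  set ε : ℝ := (Finset.univ.inf' Finset.univ_nonempty fun k => |μ0 k - (m + δ)|) / 3 with hε
  have hεpos : 0 < ε := by
    apply div_pos _ (by norm_num)
    rw [Finset.lt_inf'_iff]
    intro k _
    have := hμ0 k
    have hne : μ0 k - (m + δ) ≠ 0 := by intro h; apply this; linarith
    exact abs_pos.2 hne
  have hεle : ∀ k, 3 * ε ≤ |μ0 k - (m + δ)| := by
    intro k
    have := Finset.inf'_le (fun k => |μ0 k - (m + δ)|) (Finset.mem_univ k)
    rw [hε]; linarith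
  -- key deterministic lemma
  have key : ∀ v : EuclideanSpace ℝ (Fin K), dist v μ0 < ε →
      minDeltaComplexity c δ v = minDeltaComplexity c δ μ0 := by
    intro v hv
    have hco : ∀ k, |v k - μ0 k| ≤ ε := fun k => (coord_dist_le v μ0 k).trans hv.le
    have hco' : ∀ k, |μ0 k - v k| ≤ ε := fun k => by rw [abs_sub_comm]; exact hco k
    have hm1 : minCoord v ≤ m + ε := minCoord_stab v μ0 ε hco
    have hm2 : m ≤ minCoord v + ε := minCoord_stab μ0 v ε hco'
    have hset : deltaOptSet δ v = deltaOptSet δ μ0 := by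
      ext k
      simp only [deltaOptSet, Set.mem_setOf_eq, ← hm]
      have h3 := hεle k
      have hvk := abs_sub_le_iff.1 (hco k)
      constructor
      · intro h
        by_contra h'
        push_neg at h'
        have h4 : 3 * ε ≤ μ0 k - (m + δ) := by
          rwa [abs_of_pos (by linarith)] at h3
        linarith [hvk.2]
      · intro h
        have hne : μ0 k ≠ m + δ := fun hcc => (hμ0 k) (by linarith)
        have hlt : μ0 k < m + δ := lt_of_le_of_ne h hne
        have h4 : 3 * ε ≤ (m + δ) - μ0 k := by
          rwa [abs_of_neg (by linarith), neg_sub] at h3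
        linarith [hvk.1]
    unfold minDeltaComplexity
    rw [hset]
  have hV' := tendstoInMeasure_iff_dist.1 hV ε hεpos
  have hle : ∀ n, 1 - P {ω | ε ≤ dist (V n ω) μ0} ≤
      P {ω | minDeltaComplexity c δ (V n ω) = minDeltaComplexity c δ μ0} := by
    intro n
    rw [tsub_le_iff_right]
    calc (1 : ENNReal) = P Set.univ := measure_univ.symm
    _ ≤ P ({ω | minDeltaComplexity c δ (V n ω) = minDeltaComplexity c δ μ0}
          ∪ {ω | ε ≤ dist (V n ω) μ0}) := by
        apply measure_mono
        intro ω _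
        by_cases hd : ε ≤ dist (V n ω) μ0
        · exact Or.inr hd
        · exact Or.inl (key _ (lt_of_not_ge hd))
    _ ≤ _ := measure_union_le _ _
  have hlower : Tendsto (fun n => 1 - P {ω | ε ≤ dist (V n ω) μ0}) atTop (𝓝 1) := by
    have := ENNReal.Tendsto.sub (tendsto_const_nhds (x := (1 : ENNReal))) hV'
      (Or.inl ENNReal.one_ne_top)
    simpa using this
  exact tendsto_of_tendsto_of_tendsto_of_le_of_le hlower tendsto_const_nhds hle
    (fun n => prob_le_one)
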